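/- Consider a Stable Marriage instance with men U, women W, |U| ≤ |W|, and an agent w* ∈ W (assume complete preference lists and a deletion budget ℓ). Construct f(I, w*) by adding a new man m* whose first choice is w* (rest arbitrary) and who is ranked last by all women. Then for any set D of at most ℓ deleted agents (with w* ∉ D, m* ∉ D), w* is unassigned in some (equivalently, every) stable matching of I − D if and only if the pair {m*, w*} is contained in a stable matching of f(I, w*) − D. Consequently M is a stable matching of I − D leaving w* unassigned iff M ∪ {{m*, w*}} is stable in f(I, w*) − D. -/

import Mathlib

/-- A Stable Marriage instance with men `U` and women `W`, given by complete strict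
preference lists encoded as injective rank functions (smaller rank = more preferred). -/
structure SMI (U W : Type*) where
  mrk : U → W → ℕ
  wrk : W → U → ℕ
  minj : ∀ u, Function.Injective (mrk u)
  winj : ∀ w, Function.Injective (wrk w)

/-- `M` is a (partial) matching: relation matching each agent to at most one partner. -/
def IsMatching {U W : Type*} (M : U → W → Prop) : Prop :=
  (∀ u w w', M u w → M u w' → w = w') ∧ ∀ u u' w, M u w → M u' w → u = u'

/-- Pair `{u,w}` blocks `M`: they are not matched to each other, `u` is unassigned or
prefers `w` to its partner, and `w` is unassigned or prefers `u` to its partner. -/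
def BlocksD {U W : Type*} (I : SMI U W) (M : U → W → Prop) (u : U) (w : W) : Prop :=
  ¬ M u w ∧ (∀ w', M u w' → I.mrk u w < I.mrk u w') ∧
    ∀ u', M u' w → I.wrk w u < I.wrk w u'

/-- `M` is a stable matching of the instance restricted to the remaining (non-deleted)
agents `A ⊆ U`, `B ⊆ W`: it is a matching among agents of `A` and `B` and no pair of
remaining agents blocks it. -/
def StableOn {U W : Type*} (I : SMI U W) (A : Set U) (B : Set W)
    (M : U → W → Prop) : Prop :=
  IsMatching M ∧ (∀ u w, M u w → u ∈ A ∧ w ∈ B) ∧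
    ∀ u ∈ A, ∀ w ∈ B, ¬ BlocksD I M u w

/-- The restriction of a matching to remaining agents. -/
def restrictM {U W : Type*} (M : U → W → Prop) (A : Set U) (B : Set W) :
    U → W → Prop :=
  fun u w => M u w ∧ u ∈ A ∧ w ∈ B

/-- construction `f(I, w*)`: add one new man `m*` (encoded as `none` in
`Option U`) whose top choice is `w*` and whom every woman ranks last. Then for every
deletion set `D` of at most `ℓ` agents not containing `w*` (nor `m*`),
(i) `w*` is unassigned in some stable matching of `I − D` iff `{m*, w*}` is contained in
some stable matching of `f(I,w*) − D`, and (ii) a matching `M` is stable in `I − D`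
leaving `w*` unassigned iff `M ∪ {{m*, w*}}` is stable in `f(I,w*) − D`. -/
theorem stmt11 {U W : Type*} [DecidableEq U] [DecidableEq W]
    (I : SMI U W) (I' : SMI (Option U) W) (wstar : W)
    (ℓ : ℕ) (DU : Finset U) (DW : Finset W)
    (hbudget : DU.card + DW.card ≤ ℓ) (hws : wstar ∉ DW)
    (hextm : ∀ u w, I'.mrk (some u) w = I.mrk u w)
    (hextw : ∀ w u, I'.wrk w (some u) = I.wrk w u)
    (htop : ∀ w', w' ≠ wstar → I'.mrk none wstar < I'.mrk none w')
    (hlast : ∀ w u, I'.wrk w (some u) < I'.wrk w none) :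
    ((∃ M : U → W → Prop,
        StableOn I {u | u ∉ DU} {w | w ∉ DW} M ∧ ∀ u, ¬ M u wstar) ↔
      (∃ N : Option U → W → Prop,
        StableOn I' {x | ∀ u, x = some u → u ∉ DU} {w | w ∉ DW} N ∧ N none wstar)) ∧
    (∀ M : U → W → Prop,
      (StableOn I {u | u ∉ DU} {w | w ∉ DW} M ∧ ∀ u, ¬ M u wstar) ↔
      StableOn I' {x | ∀ u, x = some u → u ∉ DU} {w | w ∉ DW}
        (fun x w => match x with
          | some u => M u w
          | none => w = wstar)) := by

  have key : ∀ M : U → W → Prop,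
      (StableOn I {u | u ∉ DU} {w | w ∉ DW} M ∧ ∀ u, ¬ M u wstar) ↔
      StableOn I' {x | ∀ u, x = some u → u ∉ DU} {w | w ∉ DW}
        (fun x w => match x with
          | some u => M u w
          | none => w = wstar) := by
    intro M
    constructor
    · rintro ⟨⟨⟨h1, h2⟩, hmem, hstab⟩, hws'⟩
      refine ⟨⟨?_, ?_⟩, ?_, ?_⟩
      · rintro (_|u) w w' hw hw'
        · exact hw.trans hw'.symm
        · exact h1 u w w' hw hw'
      · rintro (_|u) (_|u') w hw hw'
        · rfl
        · exact absurd (hw ▸ hw') (hws' u')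
        · exact absurd (hw' ▸ hw) (hws' u)
        · exact congrArg some (h2 u u' w hw hw')
      · rintro (_|u) w hw
        · exact ⟨fun u h => absurd h.symm (Option.some_ne_none _), hw ▸ hws⟩
        · exact ⟨fun u' h => Option.some.inj h ▸ (hmem u w hw).1, (hmem u w hw).2⟩
      · rintro (_|u) hu w hw hblk
        · obtain ⟨hb1, hb2, hb3⟩ := hblk
          have hne : w ≠ wstar := fun h => hb1 h
          exact absurd (htop w hne) (not_lt.2 (le_of_lt (hb2 wstar rfl)))
        · obtain ⟨hb1, hb2, hb3⟩ := hblk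
          apply hstab u (hu u rfl) w hw
          refine ⟨hb1, ?_, ?_⟩
          · intro w' hw'
            have := hb2 w' hw'
            rwa [hextm, hextm] at this
          · intro u' hu'
            have := hb3 (some u') hu'
            rwa [hextw, hextw] at this
    · rintro ⟨⟨h1, h2⟩, hmem, hstab⟩
      have hws' : ∀ u, ¬ M u wstar := fun u hu =>
        Option.some_ne_none _ (h2 (some u) none wstar hu rfl)
      refine ⟨⟨⟨?_, ?_⟩, ?_, ?_⟩, hws'⟩
      · intro u w w' hw hw'
        exact h1 (some u) w w' hw hw'
      · intro u u' w hw hw'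
        exact Option.some.inj (h2 (some u) (some u') w hw hw')
      · intro u w hw
        obtain ⟨ha, hb⟩ := hmem (some u) w hw
        exact ⟨ha u rfl, hb⟩
      · intro u hu w hw hblk
        obtain ⟨hb1, hb2, hb3⟩ := hblk
        apply hstab (some u) (fun u' h => Option.some.inj h ▸ hu) w hw
        refine ⟨hb1, ?_, ?_⟩
        · intro w' hw'
          rw [hextm, hextm]
          exact hb2 w' hw'
        · rintro (_|u') hu'
          · have : w = wstar := hu'
            subst this
            exact hlast w u
          · rw [hextw, hextw]
            exact hb3 u' hu'
  refine ⟨?_, key⟩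
  constructor
  · rintro ⟨M, hM⟩
    exact ⟨_, (key M).1 hM, rfl⟩
  · rintro ⟨N, hN, hNw⟩
    refine ⟨fun u w => N (some u) w, ?_⟩
    obtain ⟨⟨h1, h2⟩, hmem, hstab⟩ := hN
    have hws' : ∀ u, ¬ N (some u) wstar := fun u hu =>
      Option.some_ne_none _ (h2 (some u) none wstar hu hNw)
    refine ⟨⟨⟨?_, ?_⟩, ?_, ?_⟩, hws'⟩
    · intro u w w' hw hw'
      exact h1 (some u) w w' hw hw'
    · intro u u' w hw hw'
      exact Option.some.inj (h2 _ _ w hw hw')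
    · intro u w hw
      obtain ⟨ha, hb⟩ := hmem _ _ hw
      exact ⟨ha u rfl, hb⟩
    · intro u hu w hw hblk
      obtain ⟨hb1, hb2, hb3⟩ := hblk
      apply hstab (some u) (fun u' h => Option.some.inj h ▸ hu) w hw
      refine ⟨hb1, ?_, ?_⟩
      · intro w' hw'
        rw [hextm, hextm]
        exact hb2 w' hw'
      · rintro (_|u') hu'
        · have : wstar = w := h1 none wstar w hNw hu'
          subst this
          exact hlast wstar u
        · rw [hextw, hextw]
          exact hb3 u' hu'
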